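/- In the F^α-scheme with α_n/A_n → 0: if ∑_{n=1}^∞ α_n/A_n < ∞ then P(M_n = X_n infinitely often) = 0 (almost surely only finitely many new observations are maxima), while if ∑_{n=1}^∞ α_n/A_n = ∞ then P(M_n = X_n infinitely often) = 1. -/

import Mathlib

open MeasureTheory Filter Set
open scoped ENNReal


noncomputable def betaM (a b : ℝ) : Measure ℝ :=
  (volume.restrict (Ioo 0 b)).withDensity fun u => ENNReal.ofReal (a * u ^ (a - 1))

lemma betaM_lint {a b : ℝ} (c : ℝ) (ha : 0 < a) (hc : 0 ≤ c) (hb : 0 ≤ b) :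
    ∫⁻ u, ENNReal.ofReal (u ^ c) ∂(betaM a b) = ENNReal.ofReal (a / (a + c) * b ^ (a + c)) := by
  have hac : 0 < a + c := by linarith
  rw [betaM, lintegral_withDensity_eq_lintegral_mul _ (by fun_prop) (by fun_prop)]
  have h1 : ∀ u ∈ Ioo (0:ℝ) b,
      (((fun u => ENNReal.ofReal (a * u ^ (a - 1))) * fun u => ENNReal.ofReal (u ^ c)) u)
        = ENNReal.ofReal (a * u ^ (a + c - 1)) := by
    intro u hu
    simp only [Pi.mul_apply]
    rw [← ENNReal.ofReal_mul (mul_nonneg ha.le (Real.rpow_nonneg hu.1.le _))]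
    rw [mul_assoc, ← Real.rpow_add hu.1]
    ring_nf
  rw [setLIntegral_congr_fun measurableSet_Ioo h1]
  have hint : IntegrableOn (fun u : ℝ => a * u ^ (a + c - 1)) (Ioo 0 b) volume := by
    apply Integrable.const_mul
    have := (intervalIntegral.intervalIntegrable_rpow' (a := 0) (b := b) (r := a + c - 1) (by linarith))
    rw [intervalIntegrable_iff_integrableOn_Ioc_of_le hb] at this
    exact this.mono_set Ioo_subset_Ioc_self
  rw [← ofReal_integral_eq_lintegral_ofReal hint
    (ae_restrict_of_ae_restrict_of_subset Ioo_subset_Ioc_self ?_)]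
  · congr 1
    rw [← integral_Ioc_eq_integral_Ioo, ← intervalIntegral.integral_of_le hb,
      intervalIntegral.integral_const_mul, integral_rpow (Or.inl (by linarith))]
    rw [Real.zero_rpow (by linarith)]
    field_simp
    rw [sub_add_cancel, sub_zero, mul_div_cancel_left₀ _ hac.ne']
  · filter_upwards [ae_restrict_mem measurableSet_Ioc] with u hu
    have : (0:ℝ) ≤ u ^ (a + c - 1) := Real.rpow_nonneg hu.1.le _
    positivity

lemma betaM_apply {a b : ℝ} {s : Set ℝ} (hs : MeasurableSet s) :
    betaM a b s = ∫⁻ u in s ∩ Ioo 0 b, ENNReal.ofReal (a * u ^ (a - 1)) ∂volume := by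
  rw [betaM, withDensity_apply _ hs, Measure.restrict_restrict hs]

lemma betaM_univ {a b : ℝ} (ha : 0 < a) (hb : 0 ≤ b) :
    betaM a b univ = ENNReal.ofReal (b ^ a) := by
  have := betaM_lint (a := a) (b := b) 0 ha le_rfl hb
  simp only [Real.rpow_zero, ENNReal.ofReal_one, lintegral_one, add_zero, div_self ha.ne'] at this
  rw [this, one_mul]

lemma betaM_Iic {a b : ℝ} (ha : 0 < a) (hb : 0 ≤ b) (x : ℝ) :
    betaM a b (Iic x) = ENNReal.ofReal (max (min x b) 0 ^ a) := by
  rcases le_or_gt x 0 with hx | hx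
  · rw [betaM_apply measurableSet_Iic]
    have : Iic x ∩ Ioo 0 b = ∅ := by
      ext u; simp only [mem_inter_iff, mem_Iic, mem_Ioo, mem_empty_iff_false, iff_false]
      rintro ⟨h1, h2, _⟩; linarith
    rw [this]
    simp [max_eq_right (le_trans (min_le_left x b) hx), Real.zero_rpow ha.ne']
  · rcases lt_or_ge x b with hxb | hxb
    · have key := betaM_univ ha hx.le
      rw [betaM_apply (a := a) (b := x) MeasurableSet.univ, univ_inter] at key
      rw [betaM_apply measurableSet_Iic]
      have hset : Iic x ∩ Ioo 0 b = Ioc 0 x := by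
        ext u; simp only [mem_inter_iff, mem_Iic, mem_Ioo, mem_Ioc]
        constructor
        · rintro ⟨h1, h2, h3⟩; exact ⟨h2, h1⟩
        · rintro ⟨h1, h2⟩; exact ⟨h2, h1, lt_of_le_of_lt h2 hxb⟩
      rw [hset, ← setLIntegral_congr Ioo_ae_eq_Ioc, key,
        max_eq_left (le_min hx.le hb), min_eq_left hxb.le]
    · rw [betaM_apply measurableSet_Iic]
      have hset : Iic x ∩ Ioo 0 b = Ioo 0 b := by
        apply inter_eq_self_of_subset_right
        intro u hu; exact le_trans hu.2.le hxb
      have key := betaM_univ ha hb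
      rw [betaM_apply (a := a) (b := b) MeasurableSet.univ, univ_inter] at key
      rw [hset, key, min_eq_right hxb, max_eq_left hb]

section
variable {F : ℝ → ℝ} (hFmono : Monotone F) (hFcont : Continuous F)
  (hFbot : Tendsto F atBot (nhds 0)) (hFtop : Tendsto F atTop (nhds 1))

include hFmono hFbot in
lemma F_nonneg : ∀ x, 0 ≤ F x := fun x =>
  le_of_tendsto hFbot (by filter_upwards [eventually_le_atBot x] with t ht using hFmono ht)

include hFmono hFtop in
lemma F_le_one : ∀ x, F x ≤ 1 := fun x =>
  ge_of_tendsto hFtop (by filter_upwards [eventually_ge_atTop x] with t ht using hFmono ht)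

include hFmono hFcont hFbot hFtop in
lemma map_cdf {ν : Measure ℝ} [IsFiniteMeasure ν] {a b : ℝ}
    (ha : 0 < a) (hb0 : 0 ≤ b) (hb1 : b ≤ 1)
    (hν : ∀ x, ν (Iic x) = ENNReal.ofReal (min (F x) b ^ a)) :
    ν.map F = betaM a b := by
  have hF0 := F_nonneg hFmono hFbot
  have hF1 := F_le_one hFmono hFtop
  have hmapfin : IsFiniteMeasure (ν.map F) := Measure.isFiniteMeasure_map ν F
  refine Measure.ext_of_Iic _ _ (fun u => ?_)
  rw [Measure.map_apply hFcont.measurable measurableSet_Iic, betaM_Iic ha hb0]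
  have huniv : ν univ = ENNReal.ofReal (b ^ a) := by
    have h1 : Tendsto (fun x => ν (Iic x)) atTop (nhds (ν univ)) := tendsto_measure_Iic_atTop ν
    have h2 : Tendsto (fun x => ν (Iic x)) atTop (nhds (ENNReal.ofReal (b ^ a))) := by
      simp only [hν]
      have hcont : ContinuousAt (fun s : ℝ => ENNReal.ofReal (min s b ^ a)) 1 := by
        apply ENNReal.continuous_ofReal.continuousAt.comp
        exact ContinuousAt.comp (Real.continuousAt_rpow_const _ _ (Or.inr ha.le))
          (continuous_id.min continuous_const).continuousAt
      have h3 := hcont.tendsto.comp hFtop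
      rw [min_eq_right hb1] at h3
      exact h3
    exact tendsto_nhds_unique h1 h2
  rcases lt_or_ge u 0 with hu | hu0
  · have hpre : F ⁻¹' Iic u = ∅ := by
      ext x
      simp only [mem_preimage, mem_Iic, mem_empty_iff_false, iff_false, not_le]
      exact lt_of_lt_of_le hu (hF0 x)
    rw [hpre, measure_empty, max_eq_right (le_trans (min_le_left _ _) hu.le),
      Real.zero_rpow ha.ne', ENNReal.ofReal_zero]
  rcases le_or_gt 1 u with hu1 | hu1
  · have hpre : F ⁻¹' Iic u = univ := eq_univ_of_forall fun x => le_trans (hF1 x) hu1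
    rw [hpre, huniv, min_eq_right (le_trans hb1 hu1), max_eq_left hb0]
  · by_cases hS : (F ⁻¹' Iic u).Nonempty
    · obtain ⟨x₀, hx₀⟩ : ∃ x₀, u < F x₀ := (hFtop.eventually (eventually_gt_nhds hu1)).exists
      have hbdd : BddAbove (F ⁻¹' Iic u) := ⟨x₀, fun t ht =>
        le_of_not_gt fun h => absurd (hFmono h.le) (not_le.2 (lt_of_le_of_lt ht hx₀))⟩
      set s := sSup (F ⁻¹' Iic u) with hs
      have hsmem : F s ≤ u := by
        by_contra h
        push_neg at h
        have hev : ∀ᶠ t in nhds s, u < F t :=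
          hFcont.continuousAt.eventually_const_lt h
        obtain ⟨ε, hε, hball⟩ := Metric.eventually_nhds_iff.1 hev
        have hub : ∀ t ∈ F ⁻¹' Iic u, t ≤ s - ε/2 := by
          intro t ht
          have hts : t ≤ s := le_csSup hbdd ht
          by_contra hlt
          push_neg at hlt
          have hd : dist t s < ε := by
            rw [Real.dist_eq, abs_lt]; constructor <;> linarith
          exact absurd ht (not_le.2 (hball hd))
        have := csSup_le hS hub
        linarith
      have hseq : F s = u := by
        rcases eq_or_lt_of_le hsmem with h | h
        · exact h
        · exfalso
          have hev : ∀ᶠ t in nhds s, F t < u :=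
            hFcont.continuousAt.eventually_lt_const h
          obtain ⟨ε, hε, hball⟩ := Metric.eventually_nhds_iff.1 hev
          have hmem : s + ε/2 ∈ F ⁻¹' Iic u := by
            refine (hball ?_).le
            rw [Real.dist_eq, abs_lt]; constructor <;> linarith
          have := le_csSup hbdd hmem
          linarith
      have hpre : F ⁻¹' Iic u = Iic s := by
        ext t
        simp only [mem_preimage, mem_Iic]
        exact ⟨fun h => le_csSup hbdd h, fun h => le_trans (hFmono h) hsmem⟩
      rw [hpre, hν, hseq, max_eq_left (le_min hu0 hb0)]
    · rw [not_nonempty_iff_eq_empty.1 hS, measure_empty]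
      have hu0' : u = 0 := by
        by_contra h
        have hupos : 0 < u := lt_of_le_of_ne hu0 (Ne.symm h)
        obtain ⟨t, ht⟩ := (hFbot.eventually (eventually_lt_nhds hupos)).exists
        exact hS ⟨t, ht.le⟩
      subst hu0'
      simp [min_eq_left hb0, Real.zero_rpow ha.ne']
end

section
variable {F : ℝ → ℝ} (hFmono : Monotone F) (hFcont : Continuous F)
  (hFbot : Tendsto F atBot (nhds 0)) (hFtop : Tendsto F atTop (nhds 1))

include hFcont in
lemma F_ofReal_rpow_meas (c : ℝ) : Measurable fun t => ENNReal.ofReal (F t ^ c) := by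
  have : Measurable F := hFcont.measurable
  fun_prop

include hFmono hFcont hFbot hFtop in
lemma lint_Iic {ν : Measure ℝ} [IsProbabilityMeasure ν] {a : ℝ} (ha : 0 < a)
    (hν : ∀ x, ν (Iic x) = ENNReal.ofReal (F x ^ a)) {c : ℝ} (hc : 0 ≤ c) (y : ℝ) :
    ∫⁻ t in Iic y, ENNReal.ofReal (F t ^ c) ∂ν
      = ENNReal.ofReal (a / (a + c) * F y ^ (a + c)) := by
  have hF0 := F_nonneg hFmono hFbot
  have hF1 := F_le_one hFmono hFtop
  have hres : ∀ x, (ν.restrict (Iic y)) (Iic x) = ENNReal.ofReal (min (F x) (F y) ^ a) := by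
    intro x
    rw [Measure.restrict_apply measurableSet_Iic, Iic_inter_Iic, hν, hFmono.map_min]
  have hmap := map_cdf hFmono hFcont hFbot hFtop ha (hF0 y) (hF1 y) hres
  have hmeas : Measurable fun s : ℝ => ENNReal.ofReal (s ^ c) := by fun_prop
  calc ∫⁻ t in Iic y, ENNReal.ofReal (F t ^ c) ∂ν
      = ∫⁻ s, ENNReal.ofReal (s ^ c) ∂((ν.restrict (Iic y)).map F) :=
        (lintegral_map hmeas hFcont.measurable).symm
    _ = ENNReal.ofReal (a / (a + c) * F y ^ (a + c)) := by
        rw [hmap]; exact betaM_lint c ha hc (hF0 y)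
end


theorem stmt19 {Ω : Type*} [MeasurableSpace Ω] (μ : Measure Ω) [IsProbabilityMeasure μ]
    (F : ℝ → ℝ) (hFmono : Monotone F) (hFcont : Continuous F)
    (hFbot : Tendsto F atBot (nhds 0)) (hFtop : Tendsto F atTop (nhds 1))
    (α : ℕ → ℝ) (hαpos : ∀ i, 0 < α i) (hα1 : α 0 = 1)
    (X : ℕ → Ω → ℝ) (hXmeas : ∀ i, Measurable (X i))
    (hindep : ProbabilityTheory.iIndepFun X μ)
    (hlaw : ∀ i x, μ {ω | X i ω ≤ x} = ENNReal.ofReal (F x ^ α i))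
    -- `M n` is the partial maximum of the first `n + 1` observations
    (M : ℕ → Ω → ℝ)
    (hMdef : ∀ n ω, M n ω = (Finset.range (n + 1)).sup' Finset.nonempty_range_add_one
      fun i => X i ω)
    (hratio : Tendsto (fun n => α n / ∑ i ∈ Finset.range (n + 1), α i) atTop (nhds 0)) :
    (∑' n : ℕ, ENNReal.ofReal (α n / ∑ i ∈ Finset.range (n + 1), α i) ≠ ⊤ →
      μ (limsup (fun n => {ω | M n ω = X n ω}) atTop) = 0) ∧
    (∑' n : ℕ, ENNReal.ofReal (α n / ∑ i ∈ Finset.range (n + 1), α i) = ⊤ →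
      μ (limsup (fun n => {ω | M n ω = X n ω}) atTop) = 1) := by
  classical
  have hF0 := F_nonneg hFmono hFbot
  have hF1 := F_le_one hFmono hFtop
  set S : ℕ → ℝ := fun n => ∑ i ∈ Finset.range (n + 1), α i with hSdef
  have hSpos : ∀ n, 0 < S n := fun n =>
    Finset.sum_pos (fun i _ => hαpos i) Finset.nonempty_range_add_one
  set A : ℕ → Set Ω := fun n => {ω | ∀ i < n, X i ω ≤ X n ω} with hAdef
  have hAeq : ∀ n, A n = ⋂ i ∈ Finset.range n, {ω | X i ω ≤ X n ω} := by
    intro n; ext ω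
    simp only [hAdef, mem_setOf_eq, mem_iInter, Finset.mem_range]
  have hAmeas : ∀ n, MeasurableSet (A n) := by
    intro n; rw [hAeq]
    exact Finset.measurableSet_biInter _ fun i _ => measurableSet_le (hXmeas i) (hXmeas n)
  have hMA : ∀ n, {ω | M n ω = X n ω} = A n := by
    intro n; ext ω
    simp only [mem_setOf_eq, hMdef, hAdef]
    constructor
    · intro h i hi
      calc X i ω ≤ (Finset.range (n+1)).sup' Finset.nonempty_range_add_one (fun i => X i ω) :=
            Finset.le_sup' (f := fun i => X i ω) (Finset.mem_range.2 (Nat.lt_succ_of_lt hi))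
        _ = X n ω := h
    · intro h
      refine le_antisymm (Finset.sup'_le _ _ fun i hi => ?_)
        (Finset.le_sup' (f := fun i => X i ω) (Finset.self_mem_range_succ n))
      rcases Nat.lt_succ_iff_lt_or_eq.1 (Finset.mem_range.1 hi) with h' | rfl
      · exact h i h'
      · exact le_rfl
  set ν : ℕ → Measure ℝ := fun i => μ.map (X i) with hνdef
  have hνprob : ∀ i, IsProbabilityMeasure (ν i) := fun i =>
    Measure.isProbabilityMeasure_map (hXmeas i).aemeasurable
  have hνIic : ∀ i x, ν i (Iic x) = ENNReal.ofReal (F x ^ α i) := by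
    intro i x
    rw [hνdef, Measure.map_apply (hXmeas i) measurableSet_Iic]
    exact hlaw i x
  set r : ℕ → ℝ≥0∞ := fun n => ENNReal.ofReal (α n / S n) with hrdef
  -- sub-σ-algebras generated by the first coordinates
  set G : ℕ → MeasurableSpace Ω :=
    fun n => ⨆ i ∈ {k | k < n}, MeasurableSpace.comap (X i) inferInstance with hGdef
  have hle : ∀ i, MeasurableSpace.comap (X i) inferInstance ≤ ‹MeasurableSpace Ω› :=
    fun i => measurable_iff_comap_le.1 (hXmeas i)
  have hGle : ∀ n, G n ≤ ‹MeasurableSpace Ω› := fun n => iSup₂_le fun i _ => hle i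
  have hXG : ∀ i n, i < n → Measurable[G n] (X i) := fun i n h =>
    measurable_iff_comap_le.2 (le_biSup (f := fun i => MeasurableSpace.comap (X i) inferInstance) (show i ∈ {k | k < n} from h))
  have hGmono : ∀ {m n : ℕ}, m ≤ n → G m ≤ G n := fun {m n} h =>
    biSup_mono fun i hi => lt_of_lt_of_le hi h
  have hAG : ∀ j n, j < n → MeasurableSet[G n] (A j) := by
    intro j n hjn
    rw [hAeq]
    exact Finset.measurableSet_biInter _ fun i hi =>
      measurableSet_le (hXG i n (lt_trans (Finset.mem_range.1 hi) hjn)) (hXG j n hjn)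
  have hIndepG : ∀ (Sa Ta : Set ℕ), Disjoint Sa Ta →
      ProbabilityTheory.Indep (⨆ i ∈ Sa, MeasurableSpace.comap (X i) inferInstance)
        (⨆ i ∈ Ta, MeasurableSpace.comap (X i) inferInstance) μ := by
    intro Sa Ta h
    exact ProbabilityTheory.indep_iSup_of_disjoint hle
      ((ProbabilityTheory.iIndepFun_iff_iIndep _ _ _).1 hindep) h
  -- the key Fubini step
  have step : ∀ (m : ℕ) (R' : Ω → ℝ), Measurable[G m] R' → ∀ y : ℝ,
      μ {ω | R' ω ≤ X m ω ∧ X m ω ≤ y} = ∫⁻ t in Iic y, μ {ω | R' ω ≤ t} ∂(ν m) := by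
    intro m R' hR' y
    have hR'g : Measurable R' := hR'.mono (hGle m) le_rfl
    have hind : ProbabilityTheory.IndepFun R' (X m) μ := by
      rw [ProbabilityTheory.IndepFun_iff_Indep]
      have h1 := hIndepG {k | k < m} {m} (by
        rw [Set.disjoint_left]; intro k hk hk'
        simp only [mem_setOf_eq] at hk
        simp only [mem_singleton_iff] at hk'
        omega)
      exact ProbabilityTheory.indep_of_indep_of_le_left
        (ProbabilityTheory.indep_of_indep_of_le_right h1
          (le_biSup (f := fun i => MeasurableSpace.comap (X i) inferInstance) (mem_singleton m)))
        (measurable_iff_comap_le.1 hR')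
    have hmap : μ.map (fun ω => (R' ω, X m ω)) = (μ.map R').prod (ν m) :=
      (ProbabilityTheory.indepFun_iff_map_prod_eq_prod_map_map hR'g.aemeasurable
        (hXmeas m).aemeasurable).1 hind
    have hEmeas : MeasurableSet {p : ℝ × ℝ | p.1 ≤ p.2 ∧ p.2 ≤ y} :=
      (measurableSet_le measurable_fst measurable_snd).inter
        (measurableSet_le measurable_snd measurable_const)
    have h1 : μ {ω | R' ω ≤ X m ω ∧ X m ω ≤ y}
        = ((μ.map R').prod (ν m)) {p : ℝ × ℝ | p.1 ≤ p.2 ∧ p.2 ≤ y} := by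
      rw [← hmap, Measure.map_apply (hR'g.prodMk (hXmeas m)) hEmeas]
      rfl
    rw [h1, Measure.prod_apply_symm hEmeas]
    have h2 : ∀ t : ℝ, (μ.map R') ((fun x => (x, t)) ⁻¹' {p : ℝ × ℝ | p.1 ≤ p.2 ∧ p.2 ≤ y})
        = (Iic y).indicator (fun t => μ {ω | R' ω ≤ t}) t := by
      intro t
      by_cases ht : t ≤ y
      · have hpre : (fun x : ℝ => (x, t)) ⁻¹' {p : ℝ × ℝ | p.1 ≤ p.2 ∧ p.2 ≤ y} = Iic t := by
          ext x; simp [ht]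
        rw [hpre, indicator_of_mem (mem_Iic.2 ht), Measure.map_apply hR'g measurableSet_Iic]
        rfl
      · have hpre : (fun x : ℝ => (x, t)) ⁻¹' {p : ℝ × ℝ | p.1 ≤ p.2 ∧ p.2 ≤ y} = ∅ := by
          ext x; simp [ht]
        rw [hpre, measure_empty, indicator_of_notMem (fun h => ht (mem_Iic.1 h))]
    rw [lintegral_congr h2, lintegral_indicator measurableSet_Iic]
  -- product of cdfs
  have prodF : ∀ (y : ℝ) (t : Finset ℕ), ∏ i ∈ t, ENNReal.ofReal (F y ^ α i)
      = ENNReal.ofReal (F y ^ ∑ i ∈ t, α i) := by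
    intro y t
    induction t using Finset.induction with
    | empty => simp
    | @insert a t ha ih =>
      have hsum : (0:ℝ) < α a + ∑ i ∈ t, α i :=
        add_pos_of_pos_of_nonneg (hαpos a) (Finset.sum_nonneg fun i _ => (hαpos i).le)
      rw [Finset.prod_insert ha, Finset.sum_insert ha, ih,
        ← ENNReal.ofReal_mul (Real.rpow_nonneg (hF0 y) _),
        ← Real.rpow_add' (hF0 y) hsum.ne']
  have base : ∀ (n : ℕ) (y : ℝ), μ (⋂ i ∈ Finset.range n, {ω | X i ω ≤ y})
      = ENNReal.ofReal (F y ^ ∑ i ∈ Finset.range n, α i) := by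
    intro n y
    have h := hindep.measure_inter_preimage_eq_mul (Finset.range n) (sets := fun _ => Iic y)
      (fun i _ => measurableSet_Iic)
    have hpre : ∀ i : ℕ, X i ⁻¹' Iic y = {ω | X i ω ≤ y} := fun i => rfl
    simp only [hpre] at h
    rw [h, Finset.prod_congr rfl (fun i _ => hlaw i y), prodF]
  -- the master formula, by induction on the card of s
  have G2 : ∀ (N : ℕ) (s : Finset ℕ), s.card ≤ N → ∀ (n : ℕ) (y : ℝ), (∀ j ∈ s, j < n) →
      μ ((⋂ j ∈ s, A j) ∩ ⋂ i ∈ Finset.range n, {ω | X i ω ≤ y})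
        = (∏ j ∈ s, r j) * ENNReal.ofReal (F y ^ ∑ i ∈ Finset.range n, α i) := by
    intro N
    induction N with
    | zero =>
      intro s hs n y _
      rw [Finset.card_eq_zero.1 (Nat.le_zero.1 hs)]
      simp only [Finset.notMem_empty, iInter_of_empty, iInter_univ, univ_inter,
        Finset.prod_empty, one_mul]
      exact base n y
    | succ N ih =>
      intro s hs n y hsn
      rcases s.eq_empty_or_nonempty with rfl | hne
      · simp only [Finset.notMem_empty, iInter_of_empty, iInter_univ, univ_inter,
          Finset.prod_empty, one_mul]
        exact base n y
      · set m := s.max' hne with hmdef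
        have hms : m ∈ s := s.max'_mem hne
        have hmn : m < n := hsn m hms
        set s' := s.erase m with hs'def
        have hcard : s'.card ≤ N := by
          have h1 : s'.card = s.card - 1 := by rw [hs'def]; exact Finset.card_erase_of_mem hms
          have h2 := Finset.card_pos.2 hne
          omega
        have hs'm : ∀ j ∈ s', j < m := fun j hj =>
          lt_of_le_of_ne (s.le_max' j (Finset.mem_of_mem_erase hj)) (Finset.ne_of_mem_erase hj)
        by_cases hm0 : m = 0
        · have hs0 : s = {0} := by
            refine Finset.eq_singleton_iff_unique_mem.2 ⟨hm0 ▸ hms, fun j hj => ?_⟩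
            have := s.le_max' j hj
            omega
          rw [hs0]
          have hA0 : A 0 = univ := by ext ω; simp [hAdef]
          simp only [Finset.mem_singleton, iInter_iInter_eq_left, Finset.prod_singleton]
          rw [hA0, univ_inter, base n y]
          have hr0 : r 0 = 1 := by
            simp [hrdef, hSdef, div_self (hαpos 0).ne']
          rw [hr0, one_mul]
        · have hrange : (Finset.range m).Nonempty := Finset.nonempty_range_iff.2 hm0
          set C : Set Ω := ⋂ j ∈ s', A j with hCdef
          have hCG : MeasurableSet[G m] C :=
            Finset.measurableSet_biInter _ fun j hj => hAG j m (hs'm j hj)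
          set R' : Ω → ℝ := C.piecewise ((Finset.range m).sup' hrange (fun i => X i))
            (fun _ => y + 1) with hR'def
          have hsupG : Measurable[G m] ((Finset.range m).sup' hrange fun i => X i) :=
            @Finset.measurable_sup' ℝ _ Ω (G m) _ _ ℕ (Finset.range m) hrange (fun i => X i)
              (fun i hi => hXG i m (Finset.mem_range.1 hi))
          have hconstG : Measurable[G m] (fun _ : Ω => y + 1) := measurable_const
          have hR'G : Measurable[G m] R' := Measurable.piecewise hCG hsupG hconstG
          have hsetE : ∀ t : ℝ, t ≤ y →
              {ω | R' ω ≤ t} = C ∩ ⋂ i ∈ Finset.range m, {ω | X i ω ≤ t} := by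
            intro t ht
            ext ω
            by_cases hω : ω ∈ C
            · simp only [mem_setOf_eq, hR'def, Set.piecewise_eq_of_mem _ _ _ hω,
                mem_inter_iff, hω, true_and, mem_iInter, Finset.sup'_apply,
                Finset.sup'_le_iff, Finset.mem_range]
            · simp only [mem_setOf_eq, hR'def, Set.piecewise_eq_of_notMem _ _ _ hω,
                mem_inter_iff, hω, false_and, iff_false, not_le]
              linarith
          have hEv : (⋂ j ∈ s, A j) ∩ ⋂ i ∈ Finset.range n, {ω | X i ω ≤ y}
              = {ω | R' ω ≤ X m ω ∧ X m ω ≤ y} ∩ ⋂ i ∈ Finset.Ico (m+1) n, {ω | X i ω ≤ y} := by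
            ext ω
            simp only [mem_inter_iff, mem_iInter, mem_setOf_eq, Finset.mem_range, Finset.mem_Ico]
            constructor
            · rintro ⟨hAs, hXy⟩
              have hωC : ω ∈ C := by
                rw [hCdef]
                exact mem_iInter₂.2 fun j hj => hAs j (Finset.mem_of_mem_erase hj)
              have hωAm : ∀ i < m, X i ω ≤ X m ω := hAs m hms
              refine ⟨⟨?_, hXy m hmn⟩, fun i hi => hXy i hi.2⟩
              rw [hR'def, Set.piecewise_eq_of_mem _ _ _ hωC, Finset.sup'_apply,
                Finset.sup'_le_iff]
              intro i hi
              exact hωAm i (Finset.mem_range.1 hi)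
            · rintro ⟨⟨h1, h2⟩, h3⟩
              have hωC : ω ∈ C := by
                by_contra hC
                rw [hR'def, Set.piecewise_eq_of_notMem _ _ _ hC] at h1
                linarith
              rw [hR'def, Set.piecewise_eq_of_mem _ _ _ hωC, Finset.sup'_apply,
                Finset.sup'_le_iff] at h1
              have hAm : ∀ i < m, X i ω ≤ X m ω := fun i hi =>
                h1 i (Finset.mem_range.2 hi)
              constructor
              · intro j hj
                rcases eq_or_ne j m with rfl | hjm
                · exact hAm
                · exact mem_iInter₂.1 hωC j (Finset.mem_erase.2 ⟨hjm, hj⟩)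
              · intro i hi
                rcases lt_trichotomy i m with him | rfl | hmi
                · exact le_trans (hAm i him) h2
                · exact h2
                · exact h3 i ⟨hmi, hi⟩
          rw [hEv]
          have hE1G : MeasurableSet[G (m+1)] {ω | R' ω ≤ X m ω ∧ X m ω ≤ y} := by
            have h1 : Measurable[G (m+1)] R' := hR'G.mono (hGmono (Nat.le_succ m)) le_rfl
            have h2 : Measurable[G (m+1)] (X m) := hXG m (m+1) (Nat.lt_succ_self m)
            have heq : {ω | R' ω ≤ X m ω ∧ X m ω ≤ y}
                = {ω | R' ω ≤ X m ω} ∩ {ω | X m ω ≤ y} := rfl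
            rw [heq]
            exact (measurableSet_le h1 h2).inter (measurableSet_le h2 measurable_const)
          have hE2G : MeasurableSet[⨆ i ∈ {k | m+1 ≤ k ∧ k < n},
              MeasurableSpace.comap (X i) inferInstance]
              (⋂ i ∈ Finset.Ico (m+1) n, {ω | X i ω ≤ y}) := by
            refine Finset.measurableSet_biInter _ fun i hi => ?_
            have hmem := Finset.mem_Ico.1 hi
            exact (le_biSup (f := fun i => MeasurableSpace.comap (X i) inferInstance)
              (show i ∈ {k | m+1 ≤ k ∧ k < n} from hmem)) _ ⟨Iic y, measurableSet_Iic, rfl⟩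
          have hdisj : Disjoint {k | k < m+1} {k | m+1 ≤ k ∧ k < n} := by
            rw [Set.disjoint_left]
            intro k h1 h2
            simp only [mem_setOf_eq] at h1 h2
            omega
          have hsplit := (ProbabilityTheory.Indep_iff _ _ _).1 (hIndepG _ _ hdisj) _ _ hE1G hE2G
          rw [hsplit]
          have hE2val : μ (⋂ i ∈ Finset.Ico (m+1) n, {ω | X i ω ≤ y})
              = ENNReal.ofReal (F y ^ ∑ i ∈ Finset.Ico (m+1) n, α i) := by
            have h := hindep.measure_inter_preimage_eq_mul (Finset.Ico (m+1) n)
              (sets := fun _ => Iic y) (fun i _ => measurableSet_Iic)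
            have hpre : ∀ i : ℕ, X i ⁻¹' Iic y = {ω | X i ω ≤ y} := fun i => rfl
            simp only [hpre] at h
            rw [h, Finset.prod_congr rfl (fun i _ => hlaw i y), prodF]
          haveI := hνprob m
          have hcnn : (0:ℝ) ≤ ∑ i ∈ Finset.range m, α i :=
            Finset.sum_nonneg fun i _ => (hαpos i).le
          have hrtop : (∏ j ∈ s', r j) ≠ ⊤ :=
            ENNReal.prod_ne_top fun j _ => ENNReal.ofReal_ne_top
          have hSm : α m + ∑ i ∈ Finset.range m, α i = S m := by
            show _ = ∑ i ∈ Finset.range (m+1), α i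
            rw [Finset.sum_range_succ, add_comm]
          have hE1val : μ {ω | R' ω ≤ X m ω ∧ X m ω ≤ y}
              = (∏ j ∈ s', r j) * (r m * ENNReal.ofReal (F y ^ S m)) := by
            rw [step m R' hR'G y]
            have hcong : ∀ᵐ t ∂(ν m), t ∈ Iic y → μ {ω | R' ω ≤ t}
                = (∏ j ∈ s', r j) * ENNReal.ofReal (F t ^ ∑ i ∈ Finset.range m, α i) := by
              refine ae_of_all _ fun t ht => ?_
              rw [hsetE t ht, ih s' hcard m t hs'm]
            rw [setLIntegral_congr_fun_ae measurableSet_Iic hcong,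
              lintegral_const_mul' _ _ hrtop,
              lint_Iic hFmono hFcont hFbot hFtop (hαpos m) (hνIic m) hcnn y, hSm,
              ENNReal.ofReal_mul (div_nonneg (hαpos m).le (hSpos m).le)]
          rw [hE1val, hE2val]
          have hprod : (∏ j ∈ s', r j) * r m = ∏ j ∈ s, r j := by
            rw [hs'def, Finset.prod_erase_mul _ _ hms]
          have hexp : ENNReal.ofReal (F y ^ S m)
                * ENNReal.ofReal (F y ^ ∑ i ∈ Finset.Ico (m+1) n, α i)
              = ENNReal.ofReal (F y ^ ∑ i ∈ Finset.range n, α i) := by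
            have hsplitsum : S m + ∑ i ∈ Finset.Ico (m+1) n, α i
                = ∑ i ∈ Finset.range n, α i := by
              show (∑ i ∈ Finset.range (m+1), α i) + _ = _
              simp only [Finset.range_eq_Ico]
              exact Finset.sum_Ico_consecutive _ (Nat.zero_le _) (by omega)
            have hne0 : S m + ∑ i ∈ Finset.Ico (m+1) n, α i ≠ 0 := by
              have h1 := hSpos m
              have h2 : (0:ℝ) ≤ ∑ i ∈ Finset.Ico (m+1) n, α i :=
                Finset.sum_nonneg fun i _ => (hαpos i).le
              positivity
            rw [← ENNReal.ofReal_mul (Real.rpow_nonneg (hF0 y) _),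
              ← Real.rpow_add' (hF0 y) hne0, hsplitsum]
          calc (∏ j ∈ s', r j) * (r m * ENNReal.ofReal (F y ^ S m))
                * ENNReal.ofReal (F y ^ ∑ i ∈ Finset.Ico (m+1) n, α i)
              = ((∏ j ∈ s', r j) * r m) * (ENNReal.ofReal (F y ^ S m)
                * ENNReal.ofReal (F y ^ ∑ i ∈ Finset.Ico (m+1) n, α i)) := by ring
            _ = (∏ j ∈ s, r j) * ENNReal.ofReal (F y ^ ∑ i ∈ Finset.range n, α i) := by
                rw [hprod, hexp]
  -- measure of intersections of record events
  have H : ∀ s : Finset ℕ, μ (⋂ j ∈ s, A j) = ∏ j ∈ s, r j := by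
    intro s
    rcases s.eq_empty_or_nonempty with rfl | hne
    · simp
    · set n := s.max' hne + 1 with hndef
      have hsn : ∀ j ∈ s, j < n := fun j hj => Nat.lt_succ_of_le (s.le_max' j hj)
      set E : ℕ → Set Ω := fun k =>
        (⋂ j ∈ s, A j) ∩ ⋂ i ∈ Finset.range n, {ω | X i ω ≤ (k:ℝ)} with hEdef
      have hEmono : Monotone E := by
        intro k l hkl
        refine inter_subset_inter_right _ (iInter₂_mono fun i _ => fun ω hω => ?_)
        have hω' : X i ω ≤ (k:ℝ) := hω
        have hkl' : (k:ℝ) ≤ (l:ℝ) := Nat.cast_le.2 hkl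
        exact le_trans hω' hkl'
      have hEum : ⋃ k, E k = ⋂ j ∈ s, A j := by
        apply Subset.antisymm
        · exact iUnion_subset fun k => inter_subset_left
        · intro ω hω
          obtain ⟨k, hk⟩ := exists_nat_ge
            ((Finset.range n).sup' (Finset.nonempty_range_iff.2 (by omega)) (fun i => X i ω))
          refine mem_iUnion.2 ⟨k, hω, mem_iInter₂.2 fun i hi => ?_⟩
          exact le_trans (Finset.le_sup' (f := fun i => X i ω) hi) hk
      have hlim := tendsto_measure_iUnion_atTop (μ := μ) hEmono
      rw [hEum] at hlim
      have hval : ∀ k : ℕ, μ (E k)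
          = (∏ j ∈ s, r j) * ENNReal.ofReal ((F k) ^ ∑ i ∈ Finset.range n, α i) :=
        fun k => G2 s.card s le_rfl n k hsn
      have hlim2 : Tendsto (fun k : ℕ => μ (E k)) atTop (nhds ((∏ j ∈ s, r j) * 1)) := by
        simp only [hval]
        refine ENNReal.Tendsto.const_mul ?_ (Or.inl one_ne_zero)
        have h1 : Tendsto (fun k : ℕ => F k) atTop (nhds 1) :=
          hFtop.comp tendsto_natCast_atTop_atTop
        have hcont : ContinuousAt
            (fun s : ℝ => ENNReal.ofReal (s ^ (∑ i ∈ Finset.range n, α i))) 1 :=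
          (ENNReal.continuous_ofReal.continuousAt).comp
            (Real.continuousAt_rpow_const _ _ (Or.inl one_ne_zero))
        have h2 := hcont.tendsto.comp h1
        simpa [Real.one_rpow, Function.comp_def] using h2
      have := tendsto_nhds_unique hlim hlim2
      rw [this, mul_one]
  have hPA : ∀ n, μ (A n) = r n := fun n => by simpa using H {n}
  have hiI : ProbabilityTheory.iIndepSet A μ := by
    rw [ProbabilityTheory.iIndepSet_iff_meas_biInter hAmeas]
    intro s
    rw [H s]
    exact Finset.prod_congr rfl fun j _ => (hPA j).symm
  have hfun : (fun n => {ω | M n ω = X n ω}) = A := funext hMA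
  have htsum : ∑' n, μ (A n) = ∑' n : ℕ, ENNReal.ofReal (α n / ∑ i ∈ Finset.range (n + 1), α i) :=
    tsum_congr hPA
  constructor
  · intro h
    rw [hfun]
    exact measure_limsup_atTop_eq_zero (by rw [htsum]; exact h)
  · intro h
    rw [hfun]
    exact ProbabilityTheory.measure_limsup_eq_one hAmeas hiI (by rw [htsum]; exact h)
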